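/- arXiv:1909.12659 — 4 statements merged into one kernel-verified Lean document; each statement's English description precedes it below -/
import Mathlib

section
/- Let A be an N×N complex matrix with ‖exp(tA)‖ ≤ 1 for all t ≥ 0, and fix an explicit s-stage Runge–Kutta tableau. Let T > 0, M ≥ 0 and 0 ≤ ε ≤ 1. Let F : ℝ × ℂ^N → ℂ^N satisfy ‖F(t,x)‖ ≤ M for all (t,x), and let u, d : [0,T] → ℂ^N with u differentiable, u′(t) = A·u(t) + F(t,u(t)) + d(t), ‖u′(t)‖ ≤ M and ‖d(t)‖ ≤ ε for all t ∈ [0,T]. Then there exists a constant C, depending only on the tableau and M (in particular independent of N, A, k and ε), such that for every k ∈ (0,1] and every t_n with t_n, t_n + k ∈ [0,T], the Lawson step with boundary data β ≡ 0 from U = u(t_n) at time t_n satisfies ‖U⁺ − u(t_n + k)‖ ≤ C·k. -/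
open MeasureTheory Matrix

attribute [local instance] Matrix.linftyOpNormedAddCommGroup Matrix.linftyOpNormedRing
  Matrix.linftyOpNormedAlgebra

/-- `phi j s M` is `φ_j(s M)`: `φ_0(sM) = exp(sM)` and, for `j ≥ 1`,
`φ_j(sM) = s^{-j} ∫_0^s exp((s-τ)M) τ^{j-1}/(j-1)! dτ`. -/
noncomputable def phi {N : ℕ} (j : ℕ) (s : ℝ) (M : Matrix (Fin N) (Fin N) ℂ) :
    Matrix (Fin N) (Fin N) ℂ :=
  match j with
  | 0 => NormedSpace.exp (s • M)
  | Nat.succ j =>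
      (s ^ (j + 1))⁻¹ •
        ∫ τ in (0:ℝ)..s, (τ ^ j / (Nat.factorial j : ℝ)) • NormedSpace.exp ((s - τ) • M)

/-- An explicit `s`-stage Runge-Kutta tableau: coefficients `a i j` (only the entries with
`j < i` are used by the schemes below, so the tableau is explicit), weights `b i` and
nodes `c i ∈ [0,1]`. -/
structure RKTableau (s : ℕ) where
  a : Fin s → Fin s → ℝ
  b : Fin s → ℝ
  c : Fin s → ℝ
  c_nonneg : ∀ i, 0 ≤ c i
  c_le_one : ∀ i, c i ≤ 1

/-- The stages `K_i` of the Lawson method with tableau `tab`, matrix `A`, step size `k`,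
nonlinearity `F` and boundary data `β`, starting from the value `U` at time `t`:
`K_i = exp(c_i kA)U + k Σ_{j<i} a_{ij} exp((c_i − c_j)kA)(β(t + c_j k) + F(t + c_j k, K_j))`. -/
noncomputable def lawsonStages {s N : ℕ} (tab : RKTableau s) (A : Matrix (Fin N) (Fin N) ℂ)
    (k : ℝ) (F : ℝ → (Fin N → ℂ) → Fin N → ℂ) (β : ℝ → Fin N → ℂ) (t : ℝ) (U : Fin N → ℂ) :
    Fin s → Fin N → ℂ
  | i =>
    (NormedSpace.exp ((tab.c i * k) • A)).mulVec U +
      k • ∑ j ∈ (Finset.univ.filter (fun j => j < i)).attach,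
        tab.a i j.1 • (NormedSpace.exp (((tab.c i - tab.c j.1) * k) • A)).mulVec
          (β (t + tab.c j.1 * k) +
            F (t + tab.c j.1 * k) (lawsonStages tab A k F β t U j.1))
  termination_by i => i.1
  decreasing_by
    have hj := j.2
    simp only [Finset.mem_filter, Finset.mem_univ, true_and] at hj
    exact hj

/-- One step of the Lawson method:
`U⁺ = exp(kA)U + k Σ_i b_i exp((1 − c_i)kA)(β(t + c_i k) + F(t + c_i k, K_i))`. -/
noncomputable def lawsonStep {s N : ℕ} (tab : RKTableau s) (A : Matrix (Fin N) (Fin N) ℂ)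
    (k : ℝ) (F : ℝ → (Fin N → ℂ) → Fin N → ℂ) (β : ℝ → Fin N → ℂ) (t : ℝ) (U : Fin N → ℂ) :
    Fin N → ℂ :=
  (NormedSpace.exp (k • A)).mulVec U +
    k • ∑ i : Fin s, tab.b i • (NormedSpace.exp (((1 - tab.c i) * k) • A)).mulVec
      (β (t + tab.c i * k) + F (t + tab.c i * k) (lawsonStages tab A k F β t U i))

noncomputable def mulVecCLM (N : ℕ) :
    Matrix (Fin N) (Fin N) ℂ →L[ℝ] (Fin N → ℂ) →L[ℝ] (Fin N → ℂ) :=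
  LinearMap.mkContinuous₂
    (LinearMap.mk₂ ℝ (fun A v => A.mulVec v)
      (fun A B v => Matrix.add_mulVec A B v)
      (fun a A v => by
        funext i
        simp [Matrix.mulVec, dotProduct, Finset.smul_sum, mul_assoc])
      (fun A u v => Matrix.mulVec_add A u v)
      (fun a A v => by
        funext i
        simp [Matrix.mulVec, dotProduct, Finset.smul_sum, mul_left_comm]))
    1 (fun A v => by simpa using Matrix.linfty_opNorm_mulVec A v)

@[simp] lemma mulVecCLM_apply {N : ℕ} (A : Matrix (Fin N) (Fin N) ℂ) (v : Fin N → ℂ) :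
    mulVecCLM N A v = A.mulVec v := rfl

/-- Classical Lawson local error, vanishing boundary conditions: local order 1.
There is a constant `C` depending only on the tableau and `M` (independent of `N`, `A`, `k`
and `ε`) such that one Lawson step with `β ≡ 0` from the exact value `u(t_n)` satisfies
`‖U⁺ − u(t_n + k)‖ ≤ C·k`. -/
theorem classical_local_error_order_one {s : ℕ} (tab : RKTableau s) (M : ℝ) (hM : 0 ≤ M) :
    ∃ C : ℝ, ∀ (N : ℕ) (A : Matrix (Fin N) (Fin N) ℂ),
      (∀ t : ℝ, 0 ≤ t → ‖NormedSpace.exp (t • A)‖ ≤ 1) →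
      ∀ T : ℝ, 0 < T → ∀ ε : ℝ, 0 ≤ ε → ε ≤ 1 →
      ∀ F : ℝ → (Fin N → ℂ) → Fin N → ℂ, (∀ t x, ‖F t x‖ ≤ M) →
      ∀ u d : ℝ → Fin N → ℂ,
        (∀ t ∈ Set.Icc (0:ℝ) T, HasDerivAt u (A.mulVec (u t) + F t (u t) + d t) t) →
        (∀ t ∈ Set.Icc (0:ℝ) T, ‖A.mulVec (u t) + F t (u t) + d t‖ ≤ M) →
        (∀ t ∈ Set.Icc (0:ℝ) T, ‖d t‖ ≤ ε) →
      ∀ k : ℝ, 0 < k → k ≤ 1 →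
      ∀ tn : ℝ, tn ∈ Set.Icc (0:ℝ) T → tn + k ∈ Set.Icc (0:ℝ) T →
        ‖lawsonStep tab A k F (fun _ => 0) tn (u tn) - u (tn + k)‖ ≤ C * k := by
  classical
  refine ⟨(M + 1) + (∑ i, |tab.b i|) * M, ?_⟩
  intro N A hA T hT ε hε0 hε1 F hF u d hderiv hderivbd hd k hk0 hk1 tn htn htnk
  set B := mulVecCLM N
  -- the auxiliary function v
  set g : ℝ → Matrix (Fin N) (Fin N) ℂ :=
    fun t => NormedSpace.exp ((tn + k - t) • A) with hg
  set v : ℝ → (Fin N → ℂ) := fun t => (g t).mulVec (u t) with hv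
  have hsub : Set.Icc tn (tn + k) ⊆ Set.Icc (0:ℝ) T := by
    intro t ht
    exact ⟨le_trans htn.1 ht.1, le_trans ht.2 htnk.2⟩
  have hexpR : (NormedSpace.exp : Matrix (Fin N) (Fin N) ℂ → _) = NormedSpace.exp :=
    rfl
  -- derivative of v
  have hvd : ∀ t ∈ Set.Icc tn (tn + k),
      HasDerivAt v ((g t).mulVec (F t (u t) + d t)) t := by
    intro t ht
    have hu := hderiv t (hsub ht)
    have hlin : HasDerivAt (fun τ : ℝ => tn + k - τ) (-1) t := by
      simpa using (hasDerivAt_id t).const_sub (tn + k)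
    have hexp : HasDerivAt (fun τ : ℝ => NormedSpace.exp (τ • A))
        (NormedSpace.exp ((tn + k - t) • A) * A) (tn + k - t) :=
      hasDerivAt_exp_smul_const (𝕂 := ℝ) A (tn + k - t)
    have hgd : HasDerivAt g ((-1 : ℝ) • (NormedSpace.exp ((tn + k - t) • A) * A)) t := by
      have := HasDerivAt.scomp t hexp hlin
      exact this
    have hc : HasDerivAt (fun τ => B (g τ))
        (B ((-1 : ℝ) • (NormedSpace.exp ((tn + k - t) • A) * A))) t :=
      B.hasFDerivAt.comp_hasDerivAt t hgd
    have := hc.clm_apply hu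
    have hveq : (fun τ => B (g τ) (u τ)) = v := rfl
    rw [hveq] at this
    refine this.congr_deriv ?_
    have h1 : B ((-1 : ℝ) • (NormedSpace.exp ((tn + k - t) • A) * A)) (u t)
        = -((g t * A).mulVec (u t)) := by
      simp [B, hg, hexpR, Matrix.neg_mulVec]
    have h2 : B (g t) (A.mulVec (u t) + F t (u t) + d t)
        = (g t).mulVec (A.mulVec (u t)) + (g t).mulVec (F t (u t) + d t) := by
      simp [B, Matrix.mulVec_add, add_assoc]
    rw [h1, h2, Matrix.mulVec_mulVec]
    abel
  -- norm bound on the derivative of v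
  have hvbd : ∀ t ∈ Set.Icc tn (tn + k), ‖(g t).mulVec (F t (u t) + d t)‖ ≤ M + 1 := by
    intro t ht
    calc ‖(g t).mulVec (F t (u t) + d t)‖ ≤ ‖g t‖ * ‖F t (u t) + d t‖ :=
          Matrix.linfty_opNorm_mulVec _ _
      _ ≤ 1 * (M + ε) := by
          apply mul_le_mul (hA _ (by linarith [ht.2]))
            (le_trans (norm_add_le _ _) (add_le_add (hF _ _) (hd t (hsub ht))))
            (norm_nonneg _) zero_le_one
      _ ≤ M + 1 := by rw [one_mul]; linarith
  -- mean value inequality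
  have hmvt : ‖v (tn + k) - v tn‖ ≤ (M + 1) * k := by
    have := norm_image_sub_le_of_norm_deriv_le_segment'
      (f := v) (f' := fun t => (g t).mulVec (F t (u t) + d t)) (a := tn) (b := tn + k)
      (C := M + 1) (fun t ht => (hvd t ht).hasDerivWithinAt)
      (fun t ht => hvbd t (Set.Ico_subset_Icc_self ht)) (tn + k)
      (Set.right_mem_Icc.2 (by linarith))
    simpa using this
  have e1 : tn + k - tn = k := by ring
  have e2 : tn + k - (tn + k) = 0 := by ring
  have hvtn : v tn = (NormedSpace.exp (k • A)).mulVec (u tn) := by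
    simp only [hv, hg, e1]
  have hvtnk : v (tn + k) = u (tn + k) := by
    simp only [hv, hg, e2, zero_smul, NormedSpace.exp_zero, Matrix.one_mulVec]
  -- bound on the quadrature sum
  set S : Fin N → ℂ := ∑ i : Fin s,
    tab.b i • (NormedSpace.exp (((1 - tab.c i) * k) • A)).mulVec
      ((0 : Fin N → ℂ) +
        F (tn + tab.c i * k) (lawsonStages tab A k F (fun _ => 0) tn (u tn) i)) with hS
  have hSbd : ‖S‖ ≤ (∑ i, |tab.b i|) * M := by
    rw [hS, Finset.sum_mul]
    refine le_trans (norm_sum_le _ _) (Finset.sum_le_sum fun i _ => ?_)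
    rw [norm_smul, Real.norm_eq_abs]
    refine mul_le_mul_of_nonneg_left ?_ (abs_nonneg _)
    calc ‖(NormedSpace.exp (((1 - tab.c i) * k) • A)).mulVec _‖
        ≤ ‖NormedSpace.exp (((1 - tab.c i) * k) • A)‖ *
          ‖(0 : Fin N → ℂ) + F (tn + tab.c i * k)
            (lawsonStages tab A k F (fun _ => 0) tn (u tn) i)‖ :=
          Matrix.linfty_opNorm_mulVec _ _
      _ ≤ 1 * M := by
          apply mul_le_mul (hA _ (mul_nonneg (by linarith [tab.c_le_one i]) hk0.le))
            ?_ (norm_nonneg _) zero_le_one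
          simpa using hF (tn + tab.c i * k) _
      _ = M := one_mul M
  -- assemble
  have hstep : lawsonStep tab A k F (fun _ => 0) tn (u tn) - u (tn + k)
      = (v tn - v (tn + k)) + k • S := by
    rw [hvtn, hvtnk, hS]
    simp only [lawsonStep]
    abel
  rw [hstep]
  calc ‖(v tn - v (tn + k)) + k • S‖ ≤ ‖v tn - v (tn + k)‖ + ‖k • S‖ := norm_add_le _ _
    _ ≤ (M + 1) * k + k * ((∑ i, |tab.b i|) * M) := by
        apply add_le_add
        · rw [← norm_neg]; simpa using hmvt
        · rw [norm_smul, Real.norm_eq_abs, abs_of_pos hk0]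
          exact mul_le_mul_of_nonneg_left hSbd hk0.le
    _ = ((M + 1) + (∑ i, |tab.b i|) * M) * k := by ring
end

section
/- Let A be an invertible N×N complex matrix with ‖exp(tA)‖ ≤ 1 for all t ≥ 0, ‖A⁻¹‖ ≤ C₁ and ‖τ·A·exp(τA)‖ ≤ C₄ for all τ ≥ 0. Fix an explicit s-stage Runge–Kutta tableau whose nodes satisfy 0 ≤ c₁ < c₂ < ⋯ < c_s ≤ 1 and c_i ≠ 1 for every i. Let T > 0, M, C₃ ≥ 0, 0 ≤ ε ≤ 1, let F : ℝ × ℂ^N → ℂ^N satisfy ‖F(t,x)‖ ≤ M, let β : [0,T] → ℂ^N satisfy ‖A⁻¹β(t)‖ ≤ C₃, and let u, d : [0,T] → ℂ^N with u differentiable, u′(t) = A·u(t) + β(t) + F(t,u(t)) + d(t), ‖u(t)‖ ≤ M and ‖d(t)‖ ≤ ε for all t ∈ [0,T]. Then there exists a constant C, depending only on the tableau, M, C₁, C₃ and C₄ (in particular independent of N, A, k and ε), such that for every k ∈ (0,1] and every t_n with t_n, t_n + k ∈ [0,T], the Lawson step with boundary data β from U = u(t_n) at time t_n satisfies both ‖U⁺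 − u(t_n + k)‖ ≤ C and ‖A⁻¹(U⁺ − u(t_n + k))‖ ≤ C·k. -/
set_option maxHeartbeats 1000000


open MeasureTheory Matrix

attribute [local instance] Matrix.linftyOpNormedAddCommGroup Matrix.linftyOpNormedRing
  Matrix.linftyOpNormedAlgebra

namespace LawsonAux
variable {N : ℕ}

lemma comm_exp (A : Matrix (Fin N) (Fin N) ℂ) (τ : ℝ) :
    A * NormedSpace.exp (τ • A) = NormedSpace.exp (τ • A) * A :=
  (((Commute.refl A).smul_right τ).exp_right)

lemma inv_comm_exp (A : Matrix (Fin N) (Fin N) ℂ) (hdet : IsUnit A.det) (τ : ℝ) :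
    A⁻¹ * NormedSpace.exp (τ • A) = NormedSpace.exp (τ • A) * A⁻¹ := by
  have h : Commute A⁻¹ A := by
    rw [Commute, SemiconjBy, Matrix.nonsing_inv_mul A hdet, Matrix.mul_nonsing_inv A hdet]
  exact (h.smul_right τ).exp_right

/-- mean value inequality for `t ↦ B *ᵥ u t`. -/
lemma aux_u (B : Matrix (Fin N) (Fin N) ℂ) (u g : ℝ → Fin N → ℂ)
    (a b : ℝ) (hab : a ≤ b) (Cb : ℝ)
    (hderiv : ∀ t ∈ Set.Icc a b, HasDerivAt u (g t) t)
    (hbound : ∀ t ∈ Set.Icc a b, ‖B.mulVec (g t)‖ ≤ Cb) :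
    ‖B.mulVec (u b) - B.mulVec (u a)‖ ≤ Cb * (b - a) := by
  let L : (Fin N → ℂ) →L[ℝ] (Fin N → ℂ) :=
    (LinearMap.toContinuousLinearMap (Matrix.mulVecLin B)).restrictScalars ℝ
  have hL : ∀ v, L v = B.mulVec v := fun v => rfl
  have h1 : ∀ t ∈ Set.Icc a b,
      HasDerivWithinAt (fun t => L (u t)) (L (g t)) (Set.Icc a b) t := fun t ht =>
    (L.hasFDerivAt.comp_hasDerivAt t (hderiv t ht)).hasDerivWithinAt
  have h2 := (convex_Icc a b).norm_image_sub_le_of_norm_hasDerivWithin_le h1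
    (fun t ht => (hL (g t)) ▸ hbound t ht) (Set.left_mem_Icc.2 hab) (Set.right_mem_Icc.2 hab)
  simpa [hL, Real.norm_eq_abs, abs_of_nonneg (sub_nonneg.2 hab)] using h2

/-- mean value inequality for `τ ↦ exp (τ • A) *ᵥ w`. -/
lemma aux_exp (A : Matrix (Fin N) (Fin N) ℂ)
    (hexp : ∀ t : ℝ, 0 ≤ t → ‖NormedSpace.exp (t • A)‖ ≤ 1)
    (w : Fin N → ℂ) (k : ℝ) (hk : 0 ≤ k) :
    ‖(NormedSpace.exp (k • A)).mulVec w - w‖ ≤ ‖A.mulVec w‖ * k := by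
  let Lw : Matrix (Fin N) (Fin N) ℂ →L[ℝ] (Fin N → ℂ) :=
    (LinearMap.toContinuousLinearMap
      ({ toFun := fun M : Matrix (Fin N) (Fin N) ℂ => M.mulVec w
         map_add' := fun M M' => Matrix.add_mulVec M M' w
         map_smul' := fun r M => Matrix.smul_mulVec r M w } :
        Matrix (Fin N) (Fin N) ℂ →ₗ[ℂ] (Fin N → ℂ))).restrictScalars ℝ
  have hLw : ∀ M : Matrix (Fin N) (Fin N) ℂ, Lw M = M.mulVec w := fun _ => rfl
  have hder : ∀ τ ∈ Set.Icc (0:ℝ) k,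
      HasDerivWithinAt (fun τ : ℝ => Lw (NormedSpace.exp (τ • A)))
        (Lw (A * NormedSpace.exp (τ • A))) (Set.Icc 0 k) τ := by
    intro τ hτ
    have h0 : HasDerivAt (fun τ : ℝ => NormedSpace.exp (τ • A))
        (A * NormedSpace.exp (τ • A)) τ := hasDerivAt_exp_smul_const' A τ
    exact (Lw.hasFDerivAt.comp_hasDerivAt τ h0).hasDerivWithinAt
  have hbound : ∀ τ ∈ Set.Icc (0:ℝ) k,
      ‖Lw (A * NormedSpace.exp (τ • A))‖ ≤ ‖A.mulVec w‖ := by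
    intro τ hτ
    rw [hLw]
    have : (A * NormedSpace.exp (τ • A)).mulVec w
        = (NormedSpace.exp (τ • A)).mulVec (A.mulVec w) := by
      rw [comm_exp, ← Matrix.mulVec_mulVec]
    rw [this]
    calc ‖(NormedSpace.exp (τ • A)).mulVec (A.mulVec w)‖
        ≤ ‖NormedSpace.exp (τ • A)‖ * ‖A.mulVec w‖ := Matrix.linfty_opNorm_mulVec _ _
      _ ≤ 1 * ‖A.mulVec w‖ := mul_le_mul_of_nonneg_right (hexp τ hτ.1) (norm_nonneg _)
      _ = ‖A.mulVec w‖ := one_mul _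
  have h2 := (convex_Icc (0:ℝ) k).norm_image_sub_le_of_norm_hasDerivWithin_le hder hbound
    (Set.left_mem_Icc.2 hk) (Set.right_mem_Icc.2 hk)
  simpa [hLw, Real.norm_eq_abs, abs_of_nonneg hk] using h2

lemma aux_beta (A : Matrix (Fin N) (Fin N) ℂ) (hdet : IsUnit A.det) (C₄ : ℝ)
    (hC4 : ∀ τ : ℝ, 0 ≤ τ → ‖τ • (A * NormedSpace.exp (τ • A))‖ ≤ C₄)
    (v : Fin N → ℂ) (τ : ℝ) (hτ : 0 < τ) :
    ‖(NormedSpace.exp (τ • A)).mulVec v‖ ≤ C₄ / τ * ‖A⁻¹.mulVec v‖ := by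
  have key : (NormedSpace.exp (τ • A)).mulVec v
      = τ⁻¹ • ((τ • (A * NormedSpace.exp (τ • A))).mulVec (A⁻¹.mulVec v)) := by
    rw [Matrix.smul_mulVec, Matrix.mulVec_mulVec, comm_exp, Matrix.mul_assoc,
      Matrix.mul_nonsing_inv A hdet, Matrix.mul_one,
      smul_smul, inv_mul_cancel₀ hτ.ne', one_smul]
  rw [key, norm_smul, Real.norm_eq_abs, abs_of_pos (inv_pos.2 hτ)]
  calc τ⁻¹ * ‖(τ • (A * NormedSpace.exp (τ • A))).mulVec (A⁻¹.mulVec v)‖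
      ≤ τ⁻¹ * (‖τ • (A * NormedSpace.exp (τ • A))‖ * ‖A⁻¹.mulVec v‖) :=
        mul_le_mul_of_nonneg_left (Matrix.linfty_opNorm_mulVec _ _) (inv_pos.2 hτ).le
    _ ≤ τ⁻¹ * (C₄ * ‖A⁻¹.mulVec v‖) := by
        refine mul_le_mul_of_nonneg_left ?_ (inv_pos.2 hτ).le
        exact mul_le_mul_of_nonneg_right (hC4 τ hτ.le) (norm_nonneg _)
    _ = C₄ / τ * ‖A⁻¹.mulVec v‖ := by ring

end LawsonAux

open LawsonAux in
/-- Classical Lawson local error, non-vanishing boundary conditions, strictly increasing nodes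
with `c_i ≠ 1` for all `i`: `‖U⁺ − u(t_n+k)‖ ≤ C` and `‖A⁻¹(U⁺ − u(t_n+k))‖ ≤ C·k`, where `C`
depends only on the tableau, `M`, `C₁`, `C₃` and `C₄` (independent of `N`, `A`, `k`, `ε`). -/
theorem classical_local_error_nonvanishing {s : ℕ} (tab : RKTableau s)
    (hc : StrictMono tab.c) (hc1 : ∀ i, tab.c i ≠ 1)
    (M C₁ C₃ C₄ : ℝ) (hM : 0 ≤ M) (hC₁ : 0 ≤ C₁) (hC₃ : 0 ≤ C₃) (hC₄ : 0 ≤ C₄) :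
    ∃ C : ℝ, ∀ (N : ℕ) (A : Matrix (Fin N) (Fin N) ℂ), IsUnit A.det →
      (∀ t : ℝ, 0 ≤ t → ‖NormedSpace.exp (t • A)‖ ≤ 1) → ‖A⁻¹‖ ≤ C₁ →
      (∀ τ : ℝ, 0 ≤ τ → ‖τ • (A * NormedSpace.exp (τ • A))‖ ≤ C₄) →
      ∀ T : ℝ, 0 < T → ∀ ε : ℝ, 0 ≤ ε → ε ≤ 1 →
      ∀ F : ℝ → (Fin N → ℂ) → Fin N → ℂ, (∀ t x, ‖F t x‖ ≤ M) →
      ∀ β : ℝ → Fin N → ℂ, (∀ t ∈ Set.Icc (0:ℝ) T, ‖A⁻¹.mulVec (β t)‖ ≤ C₃) →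
      ∀ u d : ℝ → Fin N → ℂ,
        (∀ t ∈ Set.Icc (0:ℝ) T,
          HasDerivAt u (A.mulVec (u t) + β t + F t (u t) + d t) t) →
        (∀ t ∈ Set.Icc (0:ℝ) T, ‖u t‖ ≤ M) →
        (∀ t ∈ Set.Icc (0:ℝ) T, ‖d t‖ ≤ ε) →
      ∀ k : ℝ, 0 < k → k ≤ 1 →
      ∀ tn : ℝ, tn ∈ Set.Icc (0:ℝ) T → tn + k ∈ Set.Icc (0:ℝ) T →
        ‖lawsonStep tab A k F β tn (u tn) - u (tn + k)‖ ≤ C ∧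
        ‖A⁻¹.mulVec (lawsonStep tab A k F β tn (u tn) - u (tn + k))‖ ≤ C * k := by

  classical
  have hc_lt : ∀ i, tab.c i < 1 := fun i => lt_of_le_of_ne (tab.c_le_one i) (hc1 i)
  set Sb : ℝ := ∑ i : Fin s, |tab.b i| with hSbdef
  have hSb : 0 ≤ Sb := Finset.sum_nonneg fun i _ => abs_nonneg _
  set C0 : ℝ := 2*M + ∑ i : Fin s, |tab.b i| * (C₃*C₄/(1 - tab.c i) + M) with hC0def
  set C2 : ℝ := Sb * (C₃ + C₁*M) + (M + C₃ + C₁*M + C₁) + M with hC2def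
  have hC0 : 0 ≤ C0 := by
    have : ∀ i ∈ (Finset.univ : Finset (Fin s)),
        0 ≤ |tab.b i| * (C₃*C₄/(1 - tab.c i) + M) := by
      intro i _
      have h1 : (0:ℝ) < 1 - tab.c i := by linarith [hc_lt i]
      have : 0 ≤ C₃*C₄/(1 - tab.c i) := div_nonneg (mul_nonneg hC₃ hC₄) h1.le
      positivity
    have := Finset.sum_nonneg this
    rw [hC0def]; linarith
  have hC2 : 0 ≤ C2 := by
    have h1 : 0 ≤ C₃ + C₁*M := by positivity
    have := mul_nonneg hSb h1
    rw [hC2def]; nlinarith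
  refine ⟨C0 + C2, ?_⟩
  intro N A hdet hexp hAinv hC4 T hT ε hε0 hε1 F hF β hβ u d hu hub hd k hk hk1 tn htn htnk
  have hmem : ∀ r : ℝ, 0 ≤ r → r ≤ 1 → tn + r * k ∈ Set.Icc (0:ℝ) T := by
    intro r hr0 hr1
    constructor
    · have : 0 ≤ r * k := mul_nonneg hr0 hk.le
      linarith [htn.1]
    · have : r * k ≤ k := by nlinarith
      linarith [htnk.2]
  have hAE : ∀ (τ : ℝ) (v : Fin N → ℂ),
      A⁻¹.mulVec ((NormedSpace.exp (τ • A)).mulVec v)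
        = (NormedSpace.exp (τ • A)).mulVec (A⁻¹.mulVec v) := by
    intro τ v
    rw [Matrix.mulVec_mulVec, inv_comm_exp A hdet, ← Matrix.mulVec_mulVec]
  -- bound on terms with A⁻¹ applied
  have hinvF : ∀ (t : ℝ) (x : Fin N → ℂ), ‖A⁻¹.mulVec (F t x)‖ ≤ C₁ * M := fun t x =>
    (Matrix.linfty_opNorm_mulVec _ _).trans
      (mul_le_mul hAinv (hF t x) (norm_nonneg _) hC₁)
  constructor
  · -- first estimate
    rw [lawsonStep, Finset.smul_sum]
    have hterm : ∀ i ∈ (Finset.univ : Finset (Fin s)),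
        ‖k • (tab.b i • (NormedSpace.exp (((1 - tab.c i) * k) • A)).mulVec
          (β (tn + tab.c i * k) +
            F (tn + tab.c i * k) (lawsonStages tab A k F β tn (u tn) i)))‖
        ≤ |tab.b i| * (C₃*C₄/(1 - tab.c i) + M) := by
      intro i _
      have h1 : (0:ℝ) < 1 - tab.c i := by linarith [hc_lt i]
      have hτ : 0 < (1 - tab.c i) * k := mul_pos h1 hk
      have hβi : ‖(NormedSpace.exp (((1 - tab.c i) * k) • A)).mulVec
          (β (tn + tab.c i * k))‖ ≤ C₄ / ((1 - tab.c i) * k) * C₃ := by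
        refine (aux_beta A hdet C₄ hC4 _ _ hτ).trans ?_
        refine mul_le_mul_of_nonneg_left ?_ (by positivity)
        exact hβ _ (hmem _ (tab.c_nonneg i) (tab.c_le_one i))
      have hFi : ‖(NormedSpace.exp (((1 - tab.c i) * k) • A)).mulVec
          (F (tn + tab.c i * k) (lawsonStages tab A k F β tn (u tn) i))‖ ≤ M := by
        refine (Matrix.linfty_opNorm_mulVec _ _).trans ?_
        calc ‖NormedSpace.exp (((1 - tab.c i) * k) • A)‖ *
            ‖F (tn + tab.c i * k) (lawsonStages tab A k F β tn (u tn) i)‖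
            ≤ 1 * M := mul_le_mul (hexp _ hτ.le) (hF _ _) (norm_nonneg _) zero_le_one
          _ = M := one_mul _
      rw [norm_smul, norm_smul, Real.norm_eq_abs, Real.norm_eq_abs, abs_of_pos hk,
        Matrix.mulVec_add]
      have hZ : ‖(NormedSpace.exp (((1 - tab.c i) * k) • A)).mulVec (β (tn + tab.c i * k)) +
          (NormedSpace.exp (((1 - tab.c i) * k) • A)).mulVec
            (F (tn + tab.c i * k) (lawsonStages tab A k F β tn (u tn) i))‖
          ≤ C₄ / ((1 - tab.c i) * k) * C₃ + M :=
        (norm_add_le _ _).trans (add_le_add hβi hFi)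
      calc k * (|tab.b i| * ‖_ + _‖)
          ≤ k * (|tab.b i| * (C₄ / ((1 - tab.c i) * k) * C₃ + M)) := by
            exact mul_le_mul_of_nonneg_left
              (mul_le_mul_of_nonneg_left hZ (abs_nonneg _)) hk.le
        _ ≤ |tab.b i| * (C₃*C₄/(1 - tab.c i) + M) := by
            have he : k * (C₄ / ((1 - tab.c i) * k) * C₃) = C₃*C₄/(1 - tab.c i) := by
              field_simp
            have hkM : k * M ≤ M := by nlinarith
            calc k * (|tab.b i| * (C₄ / ((1 - tab.c i) * k) * C₃ + M))
                = |tab.b i| * (k * (C₄ / ((1 - tab.c i) * k) * C₃) + k * M) := by ring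
              _ ≤ |tab.b i| * (C₃*C₄/(1 - tab.c i) + M) := by
                  refine mul_le_mul_of_nonneg_left ?_ (abs_nonneg _)
                  rw [he]
                  linarith
    have hsum := (norm_sum_le Finset.univ _).trans (Finset.sum_le_sum hterm)
    have hE1 : ‖(NormedSpace.exp (k • A)).mulVec (u tn)‖ ≤ M := by
      refine (Matrix.linfty_opNorm_mulVec _ _).trans ?_
      calc ‖NormedSpace.exp (k • A)‖ * ‖u tn‖
          ≤ 1 * M := mul_le_mul (hexp k hk.le) (hub tn htn) (norm_nonneg _) zero_le_one
        _ = M := one_mul _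
    calc ‖(NormedSpace.exp (k • A)).mulVec (u tn) + _ - u (tn + k)‖
        ≤ ‖(NormedSpace.exp (k • A)).mulVec (u tn) + _‖ + ‖u (tn + k)‖ := norm_sub_le _ _
      _ ≤ (‖(NormedSpace.exp (k • A)).mulVec (u tn)‖ + ‖_‖) + ‖u (tn + k)‖ := by
          exact add_le_add_left (norm_add_le _ _) _
      _ ≤ (M + ∑ i : Fin s, |tab.b i| * (C₃*C₄/(1 - tab.c i) + M)) + M := by
          exact add_le_add (add_le_add hE1 hsum) (hub _ htnk)
      _ ≤ C0 + C2 := by rw [hC0def]; linarith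
  · -- second estimate
    set w : Fin N → ℂ := A⁻¹.mulVec (u tn) with hwdef
    set S : Fin N → ℂ := ∑ i : Fin s,
      tab.b i • (NormedSpace.exp (((1 - tab.c i) * k) • A)).mulVec
        (β (tn + tab.c i * k) +
          F (tn + tab.c i * k) (lawsonStages tab A k F β tn (u tn) i)) with hSdef
    have hrw : A⁻¹.mulVec (lawsonStep tab A k F β tn (u tn) - u (tn + k))
        = ((NormedSpace.exp (k • A)).mulVec w - w) + (w - A⁻¹.mulVec (u (tn + k)))
          + k • (A⁻¹.mulVec S) := by
      rw [lawsonStep, ← hSdef, Matrix.mulVec_sub, Matrix.mulVec_add, Matrix.mulVec_smul,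
        hAE, ← hwdef]
      abel
    rw [hrw]
    -- term 1
    have ht1 : ‖(NormedSpace.exp (k • A)).mulVec w - w‖ ≤ M * k := by
      refine (aux_exp A hexp w k hk.le).trans ?_
      have hAw : A.mulVec w = u tn := by
        rw [hwdef, Matrix.mulVec_mulVec, Matrix.mul_nonsing_inv A hdet, Matrix.one_mulVec]
      rw [hAw]
      exact mul_le_mul_of_nonneg_right (hub tn htn) hk.le
    -- term 2
    have ht2 : ‖w - A⁻¹.mulVec (u (tn + k))‖ ≤ (M + C₃ + C₁*M + C₁) * k := by
      have hsub : Set.Icc tn (tn + k) ⊆ Set.Icc (0:ℝ) T := by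
        intro t ht
        exact ⟨le_trans htn.1 ht.1, le_trans ht.2 htnk.2⟩
      have hmv := aux_u A⁻¹ u (fun t => A.mulVec (u t) + β t + F t (u t) + d t)
        tn (tn + k) (by linarith) (M + C₃ + C₁*M + C₁)
        (fun t ht => hu t (hsub ht)) ?_
      · rw [hwdef, norm_sub_rev]
        simpa using hmv
      · intro t ht
        have htT := hsub ht
        have hexpand : A⁻¹.mulVec (A.mulVec (u t) + β t + F t (u t) + d t)
            = u t + A⁻¹.mulVec (β t) + A⁻¹.mulVec (F t (u t)) + A⁻¹.mulVec (d t) := by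
          rw [Matrix.mulVec_add, Matrix.mulVec_add, Matrix.mulVec_add,
            Matrix.mulVec_mulVec, Matrix.nonsing_inv_mul A hdet, Matrix.one_mulVec]
        rw [hexpand]
        have hd' : ‖A⁻¹.mulVec (d t)‖ ≤ C₁ := by
          refine (Matrix.linfty_opNorm_mulVec _ _).trans ?_
          calc ‖A⁻¹‖ * ‖d t‖ ≤ C₁ * ε :=
                mul_le_mul hAinv (hd t htT) (norm_nonneg _) hC₁
            _ ≤ C₁ := by nlinarith
        calc ‖u t + A⁻¹.mulVec (β t) + A⁻¹.mulVec (F t (u t)) + A⁻¹.mulVec (d t)‖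
            ≤ ‖u t + A⁻¹.mulVec (β t) + A⁻¹.mulVec (F t (u t))‖ + ‖A⁻¹.mulVec (d t)‖ :=
              norm_add_le _ _
          _ ≤ (‖u t‖ + ‖A⁻¹.mulVec (β t)‖ + ‖A⁻¹.mulVec (F t (u t))‖) + ‖A⁻¹.mulVec (d t)‖ :=
              add_le_add_left (norm_add₃_le) _
          _ ≤ M + C₃ + C₁*M + C₁ := by
              have := hub t htT
              have := hβ t htT
              have := hinvF t (u t)
              linarith
    -- term 3
    have ht3 : ‖k • (A⁻¹.mulVec S)‖ ≤ Sb * (C₃ + C₁*M) * k := by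
      have hSrw : A⁻¹.mulVec S = ∑ i : Fin s,
          tab.b i • (NormedSpace.exp (((1 - tab.c i) * k) • A)).mulVec
            (A⁻¹.mulVec (β (tn + tab.c i * k) +
              F (tn + tab.c i * k) (lawsonStages tab A k F β tn (u tn) i))) := by
        show (Matrix.mulVecLin A⁻¹) S = _
        rw [hSdef, map_sum]
        refine Finset.sum_congr rfl fun i _ => ?_
        rw [Matrix.mulVecLin_apply, Matrix.mulVec_smul, hAE]
      have hterm3 : ∀ i ∈ (Finset.univ : Finset (Fin s)),
          ‖tab.b i • (NormedSpace.exp (((1 - tab.c i) * k) • A)).mulVec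
            (A⁻¹.mulVec (β (tn + tab.c i * k) +
              F (tn + tab.c i * k) (lawsonStages tab A k F β tn (u tn) i)))‖
          ≤ |tab.b i| * (C₃ + C₁*M) := by
        intro i _
        have h1 : (0:ℝ) ≤ (1 - tab.c i) * k := by nlinarith [hc_lt i]
        rw [norm_smul, Real.norm_eq_abs]
        refine mul_le_mul_of_nonneg_left ?_ (abs_nonneg _)
        refine (Matrix.linfty_opNorm_mulVec _ _).trans ?_
        have hv : ‖A⁻¹.mulVec (β (tn + tab.c i * k) +
            F (tn + tab.c i * k) (lawsonStages tab A k F β tn (u tn) i))‖ ≤ C₃ + C₁*M := by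
          rw [Matrix.mulVec_add]
          refine (norm_add_le _ _).trans (add_le_add ?_ (hinvF _ _))
          exact hβ _ (hmem _ (tab.c_nonneg i) (tab.c_le_one i))
        calc ‖NormedSpace.exp (((1 - tab.c i) * k) • A)‖ * ‖_‖
            ≤ 1 * (C₃ + C₁*M) :=
              mul_le_mul (hexp _ h1) hv (norm_nonneg _) zero_le_one
          _ = C₃ + C₁*M := one_mul _
      have hnS : ‖A⁻¹.mulVec S‖ ≤ Sb * (C₃ + C₁*M) := by
        rw [hSrw]
        refine (norm_sum_le _ _).trans ?_
        rw [hSbdef, Finset.sum_mul]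
        exact Finset.sum_le_sum hterm3
      rw [norm_smul, Real.norm_eq_abs, abs_of_pos hk, mul_comm]
      exact mul_le_mul_of_nonneg_right hnS hk.le
    calc ‖_ + _ + _‖ ≤ ‖_‖ + ‖_‖ + ‖_‖ := norm_add₃_le
      _ ≤ M * k + (M + C₃ + C₁*M + C₁) * k + Sb * (C₃ + C₁*M) * k :=
          add_le_add (add_le_add ht1 ht2) ht3
      _ ≤ (C0 + C2) * k := by rw [hC2def]; nlinarith
end

section
/- Let A be an invertible N×N complex matrix with ‖exp(tA)‖ ≤ 1 for all t ≥ 0, ‖A⁻¹‖ ≤ C₁ and ‖τ·A·exp(τA)‖ ≤ C₄ for all τ ≥ 0. Fix an explicit s-stage Runge–Kutta tableau whose nodes satisfy 0 ≤ c₁ < c₂ < ⋯ < c_s = 1 (so that the last node equals 1). Let T > 0, M, C₃ ≥ 0, 0 ≤ ε ≤ 1, let F : ℝ × ℂ^N → ℂ^N satisfy ‖F(t,x)‖ ≤ M, let β : [0,T] → ℂ^N satisfy ‖A⁻¹β(t)‖ ≤ C₃, set B = sup_{t∈[0,T]} ‖β(t)‖, and let u, d : [0,T] → ℂ^N with u differentiable,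 u′(t) = A·u(t) + β(t) + F(t,u(t)) + d(t), ‖u(t)‖ ≤ M and ‖d(t)‖ ≤ ε for all t ∈ [0,T]. Then there exists a constant C, depending only on the tableau, M, C₁, C₃ and C₄, such that for every k ∈ (0,1] and every t_n with t_n, t_n + k ∈ [0,T], the Lawson step with boundary data β from U = u(t_n) at time t_n satisfies both ‖U⁺ − u(t_n + k)‖ ≤ C·(1 + k·B) and ‖A⁻¹(U⁺ − u(t_n + k))‖ ≤ C·k. -/
open MeasureTheory Matrix

attribute [local instance] Matrix.linftyOpNormedAddCommGroup Matrix.linftyOpNormedRing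
  Matrix.linftyOpNormedAlgebra

set_option maxHeartbeats 1000000

/-- Classical Lawson local error, non-vanishing boundary conditions, strictly increasing nodes
with last node `c_s = 1`: `‖U⁺ − u(t_n+k)‖ ≤ C·(1 + k·B)` and `‖A⁻¹(U⁺ − u(t_n+k))‖ ≤ C·k`,
where `B` bounds `‖β‖` on `[0,T]` and `C` depends only on the tableau, `M`, `C₁`, `C₃`, `C₄`. -/
theorem classical_local_error_last_node_one {s : ℕ} (hs : 0 < s) (tab : RKTableau s)
    (hc : StrictMono tab.c) (hcs : tab.c ⟨s - 1, Nat.sub_lt hs Nat.one_pos⟩ = 1)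
    (M C₁ C₃ C₄ : ℝ) (hM : 0 ≤ M) (hC₁ : 0 ≤ C₁) (hC₃ : 0 ≤ C₃) (hC₄ : 0 ≤ C₄) :
    ∃ C : ℝ, ∀ (N : ℕ) (A : Matrix (Fin N) (Fin N) ℂ), IsUnit A.det →
      (∀ t : ℝ, 0 ≤ t → ‖NormedSpace.exp (t • A)‖ ≤ 1) → ‖A⁻¹‖ ≤ C₁ →
      (∀ τ : ℝ, 0 ≤ τ → ‖τ • (A * NormedSpace.exp (τ • A))‖ ≤ C₄) →
      ∀ T : ℝ, 0 < T → ∀ ε : ℝ, 0 ≤ ε → ε ≤ 1 →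
      ∀ F : ℝ → (Fin N → ℂ) → Fin N → ℂ, (∀ t x, ‖F t x‖ ≤ M) →
      ∀ β : ℝ → Fin N → ℂ, (∀ t ∈ Set.Icc (0:ℝ) T, ‖A⁻¹.mulVec (β t)‖ ≤ C₃) →
      ∀ B : ℝ, (∀ t ∈ Set.Icc (0:ℝ) T, ‖β t‖ ≤ B) →
      ∀ u d : ℝ → Fin N → ℂ,
        (∀ t ∈ Set.Icc (0:ℝ) T,
          HasDerivAt u (A.mulVec (u t) + β t + F t (u t) + d t) t) →
        (∀ t ∈ Set.Icc (0:ℝ) T, ‖u t‖ ≤ M) →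
        (∀ t ∈ Set.Icc (0:ℝ) T, ‖d t‖ ≤ ε) →
      ∀ k : ℝ, 0 < k → k ≤ 1 →
      ∀ tn : ℝ, tn ∈ Set.Icc (0:ℝ) T → tn + k ∈ Set.Icc (0:ℝ) T →
        ‖lawsonStep tab A k F β tn (u tn) - u (tn + k)‖ ≤ C * (1 + k * B) ∧
        ‖A⁻¹.mulVec (lawsonStep tab A k F β tn (u tn) - u (tn + k))‖ ≤ C * k := by
  classical
  set Sb : ℝ := ∑ i : Fin s, |tab.b i| with hSbdef
  have hSb0 : 0 ≤ Sb := Finset.sum_nonneg fun i _ => abs_nonneg _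
  set D : ℝ := M + C₃ + C₁ * M + C₁ with hDdef
  have hD0 : 0 ≤ D := by positivity
  refine ⟨(2*M + Sb*M + Sb) + (M + D + Sb*(C₃ + C₁*M)), ?_⟩
  intro N A hdet hexp hAinv _hC4 T hT ε hε hε1 F hF β hβ B hB u d hu hum hd k hk hk1 tn htn htnk
  have hB0 : 0 ≤ B := le_trans (norm_nonneg _) (hB tn htn)
  have hAiA : A⁻¹ * A = 1 := Matrix.nonsing_inv_mul A hdet
  have hAAi : A * A⁻¹ = 1 := Matrix.mul_nonsing_inv A hdet
  have hcommA : Commute A⁻¹ A := by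
    unfold Commute SemiconjBy; rw [hAiA, hAAi]
  have hcomm : ∀ σ : ℝ, A⁻¹ * NormedSpace.exp (σ • A) = NormedSpace.exp (σ • A) * A⁻¹ :=
    fun σ => ((hcommA.smul_right σ).exp_right).eq
  -- norm of exp-mulVec
  have hexpn : ∀ σ : ℝ, 0 ≤ σ → ∀ v : Fin N → ℂ,
      ‖(NormedSpace.exp (σ • A)).mulVec v‖ ≤ ‖v‖ := by
    intro σ hσ v
    refine (Matrix.linfty_opNorm_mulVec _ _).trans ?_
    have := mul_le_mul_of_nonneg_right (hexp σ hσ) (norm_nonneg v)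
    simpa using this
  -- key: ‖A⁻¹ (exp(kA) - 1)‖ ≤ k
  have hkey : ‖A⁻¹ * (NormedSpace.exp (k • A) - 1)‖ ≤ k := by
    have heq : (NormedSpace.exp : Matrix (Fin N) (Fin N) ℂ → Matrix (Fin N) (Fin N) ℂ)
        = NormedSpace.exp := rfl
    have hderiv : ∀ τ : ℝ, HasDerivAt (fun τ : ℝ => A⁻¹ * NormedSpace.exp (τ • A))
        (NormedSpace.exp (τ • A)) τ := by
      intro τ
      have h1 : HasDerivAt (fun τ : ℝ => NormedSpace.exp (τ • A))
          (NormedSpace.exp (τ • A) * A) τ := by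
        rw [heq]
        exact hasDerivAt_exp_smul_const A τ
      have h2 := h1.const_mul A⁻¹
      have hAc : NormedSpace.exp (τ • A) * A = A * NormedSpace.exp (τ • A) :=
        (((Commute.refl A).smul_left τ).exp_left).eq
      rw [hAc, ← mul_assoc, hAiA, one_mul] at h2
      exact h2
    have hmvt := Convex.norm_image_sub_le_of_norm_hasDerivWithin_le
      (f := fun τ : ℝ => A⁻¹ * NormedSpace.exp (τ • A))
      (f' := fun τ : ℝ => NormedSpace.exp (τ • A))
      (s := Set.Icc (0:ℝ) k) (C := 1)
      (fun x _ => (hderiv x).hasDerivWithinAt)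
      (fun x hx => hexp x hx.1) (convex_Icc 0 k)
      ⟨le_refl 0, hk.le⟩ ⟨hk.le, le_refl k⟩
    simp only [zero_smul, NormedSpace.exp_zero, mul_one, sub_zero, one_mul,
      Real.norm_eq_abs, abs_of_pos hk] at hmvt
    calc ‖A⁻¹ * (NormedSpace.exp (k • A) - 1)‖
        = ‖A⁻¹ * NormedSpace.exp (k • A) - A⁻¹ * 1‖ := by rw [mul_sub]
      _ ≤ k := by rw [mul_one]; exact hmvt
  -- Lipschitz bound for A⁻¹ u on [tn, tn+k]
  have hsub : Set.Icc tn (tn+k) ⊆ Set.Icc (0:ℝ) T := Set.Icc_subset_Icc htn.1 htnk.2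
  have hLip : ‖A⁻¹.mulVec (u tn) - A⁻¹.mulVec (u (tn+k))‖ ≤ D * k := by
    set g' : ℝ → Fin N → ℂ := fun t =>
      u t + A⁻¹.mulVec (β t) + A⁻¹.mulVec (F t (u t)) + A⁻¹.mulVec (d t) with hg'def
    have hder : ∀ t ∈ Set.Icc tn (tn+k),
        HasDerivWithinAt (fun t => A⁻¹.mulVec (u t)) (g' t) (Set.Icc tn (tn+k)) t := by
      intro t ht
      have h1 := hu t (hsub ht)
      have h2 : HasDerivAt (fun t => A⁻¹.mulVec (u t))
          (A⁻¹.mulVec (A.mulVec (u t) + β t + F t (u t) + d t)) t := by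
        have h3 := (((LinearMap.toContinuousLinearMap (Matrix.mulVecLin A⁻¹)).restrictScalars ℝ).hasFDerivAt
          (x := u t)).comp_hasDerivAt t h1
        exact h3
      have h4 : A⁻¹.mulVec (A.mulVec (u t) + β t + F t (u t) + d t) = g' t := by
        simp only [Matrix.mulVec_add, Matrix.mulVec_mulVec, hAiA, Matrix.one_mulVec, hg'def]
      rw [h4] at h2
      exact h2.hasDerivWithinAt
    have hbound : ∀ t ∈ Set.Icc tn (tn+k), ‖g' t‖ ≤ D := by
      intro t ht
      have h1 : ‖u t‖ ≤ M := hum t (hsub ht)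
      have h2 : ‖A⁻¹.mulVec (β t)‖ ≤ C₃ := hβ t (hsub ht)
      have h3 : ‖A⁻¹.mulVec (F t (u t))‖ ≤ C₁ * M :=
        (Matrix.linfty_opNorm_mulVec _ _).trans
          (mul_le_mul hAinv (hF _ _) (norm_nonneg _) hC₁)
      have h4 : ‖A⁻¹.mulVec (d t)‖ ≤ C₁ := by
        refine (Matrix.linfty_opNorm_mulVec _ _).trans ?_
        have := mul_le_mul hAinv ((hd t (hsub ht)).trans hε1) (norm_nonneg _) hC₁
        simpa using this
      calc ‖g' t‖ ≤ ‖u t + A⁻¹.mulVec (β t) + A⁻¹.mulVec (F t (u t))‖ + ‖A⁻¹.mulVec (d t)‖ :=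
            norm_add_le _ _
        _ ≤ (‖u t + A⁻¹.mulVec (β t)‖ + ‖A⁻¹.mulVec (F t (u t))‖) + ‖A⁻¹.mulVec (d t)‖ :=
            add_le_add_left (norm_add_le _ _) _
        _ ≤ ((‖u t‖ + ‖A⁻¹.mulVec (β t)‖) + ‖A⁻¹.mulVec (F t (u t))‖) + ‖A⁻¹.mulVec (d t)‖ :=
            add_le_add_left (add_le_add_left (norm_add_le _ _) _) _
        _ ≤ ((M + C₃) + C₁ * M) + C₁ := add_le_add (add_le_add (add_le_add h1 h2) h3) h4
        _ = D := by rw [hDdef]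
    have hmvt := Convex.norm_image_sub_le_of_norm_hasDerivWithin_le hder hbound
      (convex_Icc tn (tn+k)) (Set.right_mem_Icc.2 (by linarith)) (Set.left_mem_Icc.2 (by linarith))
    calc ‖A⁻¹.mulVec (u tn) - A⁻¹.mulVec (u (tn+k))‖ ≤ D * ‖tn - (tn+k)‖ := hmvt
      _ = D * k := by
          rw [show tn - (tn+k) = -k by ring, Real.norm_eq_abs, abs_neg, abs_of_pos hk]
  -- stage inputs
  set w : Fin s → Fin N → ℂ := fun i => β (tn + tab.c i * k) +
      F (tn + tab.c i * k) (lawsonStages tab A k F β tn (u tn) i) with hwdef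
  have htmem : ∀ i : Fin s, tn + tab.c i * k ∈ Set.Icc (0:ℝ) T := by
    intro i
    constructor
    · have := mul_nonneg (tab.c_nonneg i) hk.le
      linarith [htn.1]
    · have : tab.c i * k ≤ k := by
        have := mul_le_mul_of_nonneg_right (tab.c_le_one i) hk.le
        simpa using this
      linarith [htnk.2]
  have hwnorm : ∀ i, ‖w i‖ ≤ B + M := by
    intro i
    exact (norm_add_le _ _).trans (add_le_add (hB _ (htmem i)) (hF _ _))
  have hAw : ∀ i, ‖A⁻¹.mulVec (w i)‖ ≤ C₃ + C₁ * M := by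
    intro i
    rw [hwdef, Matrix.mulVec_add]
    refine (norm_add_le _ _).trans (add_le_add (hβ _ (htmem i)) ?_)
    exact (Matrix.linfty_opNorm_mulVec _ _).trans
      (mul_le_mul hAinv (hF _ _) (norm_nonneg _) hC₁)
  have hσ : ∀ i : Fin s, (0:ℝ) ≤ (1 - tab.c i) * k :=
    fun i => mul_nonneg (by linarith [tab.c_le_one i]) hk.le
  have hV : lawsonStep tab A k F β tn (u tn) = (NormedSpace.exp (k • A)).mulVec (u tn) +
      k • ∑ i : Fin s, tab.b i •
        (NormedSpace.exp (((1 - tab.c i) * k) • A)).mulVec (w i) := rfl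
  -- first bound
  have hsumnorm : ‖∑ i : Fin s, tab.b i •
      (NormedSpace.exp (((1 - tab.c i) * k) • A)).mulVec (w i)‖ ≤ Sb * (B + M) := by
    refine (norm_sum_le _ _).trans ?_
    rw [hSbdef, Finset.sum_mul]
    refine Finset.sum_le_sum fun i _ => ?_
    rw [norm_smul, Real.norm_eq_abs]
    exact mul_le_mul_of_nonneg_left (((hexpn _ (hσ i)) _).trans (hwnorm i)) (abs_nonneg _)
  have hfirst : ‖lawsonStep tab A k F β tn (u tn) - u (tn + k)‖ ≤
      (M + k * (Sb * (B + M))) + M := by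
    rw [hV]
    refine (norm_sub_le _ _).trans ?_
    refine add_le_add ((norm_add_le _ _).trans (add_le_add ?_ ?_)) (hum _ htnk)
    · exact (hexpn k hk.le _).trans (hum _ htn)
    · rw [norm_smul, Real.norm_eq_abs, abs_of_pos hk]
      exact mul_le_mul_of_nonneg_left hsumnorm hk.le
  -- decomposition for the second bound
  have hAS : A⁻¹.mulVec (∑ i : Fin s, tab.b i •
      (NormedSpace.exp (((1 - tab.c i) * k) • A)).mulVec (w i)) =
      ∑ i : Fin s, tab.b i •
        (NormedSpace.exp (((1 - tab.c i) * k) • A)).mulVec (A⁻¹.mulVec (w i)) := by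
    have h1 : A⁻¹.mulVec (∑ i : Fin s, tab.b i •
        (NormedSpace.exp (((1 - tab.c i) * k) • A)).mulVec (w i)) =
        Matrix.mulVecLin A⁻¹ (∑ i : Fin s, tab.b i •
        (NormedSpace.exp (((1 - tab.c i) * k) • A)).mulVec (w i)) := by
      rw [Matrix.mulVecLin_apply]
    rw [h1, map_sum]
    refine Finset.sum_congr rfl fun i _ => ?_
    rw [Matrix.mulVecLin_apply, Matrix.mulVec_smul, Matrix.mulVec_mulVec, hcomm,
      ← Matrix.mulVec_mulVec]
  have hAsmul : ∀ v : Fin N → ℂ, A⁻¹.mulVec (k • v) = k • A⁻¹.mulVec v :=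
    fun v => Matrix.mulVec_smul _ _ _
  have hdecomp : A⁻¹.mulVec (lawsonStep tab A k F β tn (u tn) - u (tn + k)) =
      (A⁻¹ * (NormedSpace.exp (k • A) - 1)).mulVec (u tn) +
      (A⁻¹.mulVec (u tn) - A⁻¹.mulVec (u (tn + k))) +
      k • ∑ i : Fin s, tab.b i •
        (NormedSpace.exp (((1 - tab.c i) * k) • A)).mulVec (A⁻¹.mulVec (w i)) := by
    rw [hV, Matrix.mulVec_sub, Matrix.mulVec_add, hAsmul, hAS, Matrix.mulVec_mulVec,
      mul_sub, mul_one, Matrix.sub_mulVec]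
    abel
  have hAsumnorm : ‖∑ i : Fin s, tab.b i •
      (NormedSpace.exp (((1 - tab.c i) * k) • A)).mulVec (A⁻¹.mulVec (w i))‖ ≤
      Sb * (C₃ + C₁ * M) := by
    refine (norm_sum_le _ _).trans ?_
    rw [hSbdef, Finset.sum_mul]
    refine Finset.sum_le_sum fun i _ => ?_
    rw [norm_smul, Real.norm_eq_abs]
    exact mul_le_mul_of_nonneg_left (((hexpn _ (hσ i)) _).trans (hAw i)) (abs_nonneg _)
  have hsecond : ‖A⁻¹.mulVec (lawsonStep tab A k F β tn (u tn) - u (tn + k))‖ ≤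
      k * M + D * k + k * (Sb * (C₃ + C₁ * M)) := by
    rw [hdecomp]
    refine (norm_add_le _ _).trans (add_le_add ((norm_add_le _ _).trans (add_le_add ?_ hLip)) ?_)
    · exact (Matrix.linfty_opNorm_mulVec _ _).trans
        (mul_le_mul hkey (hum _ htn) (norm_nonneg _) hk.le)
    · rw [norm_smul, Real.norm_eq_abs, abs_of_pos hk]
      exact mul_le_mul_of_nonneg_left hAsumnorm hk.le
  constructor
  · refine hfirst.trans ?_
    have h1 : 0 ≤ M + D + Sb*(C₃ + C₁*M) := by positivity
    have h2 : 0 ≤ k * B := mul_nonneg hk.le hB0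
    nlinarith [mul_nonneg hSb0 (mul_nonneg hk.le hM), mul_nonneg hSb0 h2,
      mul_nonneg h1 h2, mul_le_of_le_one_left hSb0 hk1]
  · refine hsecond.trans ?_
    have h1 : 0 ≤ 2*M + Sb*M + Sb := by positivity
    nlinarith [mul_nonneg h1 hk.le]
end

section
/- Fix N ≥ 1, set h = 1/(N+1), and let A be the N×N real tridiagonal matrix with diagonal entries A_{ii} = −2/h², off-diagonal entries A_{i,i+1} = A_{i+1,i} = 1/h², and all other entries 0. Then A is invertible and ‖A⁻¹‖_∞ ≤ 1/8, where ‖·‖_∞ denotes the operator norm on N×N matrices induced by the maximum norm on ℝ^N. -/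
open Matrix

attribute [local instance] Matrix.linftyOpNormedAddCommGroup Matrix.linftyOpNormedRing
  Matrix.linftyOpNormedAlgebra

/-- The `N × N` tridiagonal matrix `(1/h²)·tridiag(1, −2, 1)`: the standard second-order
finite-difference discretization of the 1D Laplacian with homogeneous Dirichlet conditions. -/
noncomputable def dirichletLaplacian (N : ℕ) (h : ℝ) : Matrix (Fin N) (Fin N) ℝ :=
  Matrix.of fun i j =>
    if (i : ℕ) = (j : ℕ) then -2 / h ^ 2
    else if (i : ℕ) + 1 = (j : ℕ) ∨ (j : ℕ) + 1 = (i : ℕ) then 1 / h ^ 2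
    else 0

noncomputable def gf (N a b : ℕ) : ℝ := ((min a b : ℕ) : ℝ) * ((N : ℝ) + 1 - ((max a b : ℕ) : ℝ))

lemma gf_secondDiff (N a b : ℕ) (ha1 : 1 ≤ a) (haN : a ≤ N) (hb1 : 1 ≤ b) (hbN : b ≤ N) :
    gf N (a - 1) b - 2 * gf N a b + gf N (a + 1) b =
      if a = b then -((N : ℝ) + 1) else 0 := by
  unfold gf
  rcases lt_trichotomy a b with h | h | h
  · have h1 : min (a - 1) b = a - 1 := by omega
    have h2 : max (a - 1) b = b := by omega
    have h3 : min a b = a := by omega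
    have h4 : max a b = b := by omega
    have h5 : min (a + 1) b = a + 1 := by omega
    have h6 : max (a + 1) b = b := by omega
    rw [h1, h2, h3, h4, h5, h6, if_neg (by omega)]
    have : ((a - 1 : ℕ) : ℝ) = (a : ℝ) - 1 := by
      push_cast [Nat.cast_sub ha1]; ring
    rw [this]; push_cast; ring
  · have h1 : min (a - 1) b = a - 1 := by omega
    have h2 : max (a - 1) b = b := by omega
    have h3 : min a b = a := by omega
    have h4 : max a b = b := by omega
    have h5 : min (a + 1) b = b := by omega
    have h6 : max (a + 1) b = a + 1 := by omega
    rw [h1, h2, h3, h4, h5, h6, if_pos h]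
    have : ((a - 1 : ℕ) : ℝ) = (a : ℝ) - 1 := by
      push_cast [Nat.cast_sub ha1]; ring
    rw [this]; subst h; push_cast; ring
  · have h1 : min (a - 1) b = b := by omega
    have h2 : max (a - 1) b = a - 1 := by omega
    have h3 : min a b = b := by omega
    have h4 : max a b = a := by omega
    have h5 : min (a + 1) b = b := by omega
    have h6 : max (a + 1) b = a + 1 := by omega
    rw [h1, h2, h3, h4, h5, h6, if_neg (by omega)]
    have : ((a - 1 : ℕ) : ℝ) = (a : ℝ) - 1 := by
      push_cast [Nat.cast_sub ha1]; ring
    rw [this]; push_cast; ring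

lemma gauss1 (n : ℕ) : ∑ k ∈ Finset.range n, ((k : ℝ) + 1) = n * (n + 1) / 2 := by
  induction n with
  | zero => simp
  | succ m ih => rw [Finset.sum_range_succ, ih]; push_cast; ring

lemma gauss2 (n : ℕ) : ∑ k ∈ Finset.range n, ((n : ℝ) - k) = n * (n + 1) / 2 := by
  have : ∑ k ∈ Finset.range n, ((n : ℝ) - k)
      = ∑ k ∈ Finset.range n, ((k : ℝ) + 1) := by
    rw [← Finset.sum_range_reflect]
    apply Finset.sum_congr rfl
    intro k hk
    have hk' : k < n := Finset.mem_range.mp hk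
    have : ((n - 1 - k : ℕ) : ℝ) = (n : ℝ) - 1 - k := by
      have h1 : k ≤ n - 1 := by omega
      push_cast [Nat.cast_sub h1, Nat.cast_sub (by omega : 1 ≤ n)]
      ring
    rw [this]; ring
  rw [this, gauss1]

lemma gf_rowSum (N a : ℕ) (ha1 : 1 ≤ a) (haN : a ≤ N) :
    ∑ k ∈ Finset.range N, gf N a (k + 1) =
      ((N : ℝ) + 1) * a * ((N : ℝ) + 1 - a) / 2 := by
  have hsplit : ∑ k ∈ Finset.range N, gf N a (k + 1)
      = ∑ k ∈ Finset.range a, gf N a (k + 1) + ∑ k ∈ Finset.Ico a N, gf N a (k + 1) := by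
    rw [Finset.range_eq_Ico, ← Finset.sum_Ico_consecutive _ (Nat.zero_le a) haN,
      ← Finset.range_eq_Ico]
  have h1 : ∑ k ∈ Finset.range a, gf N a (k + 1)
      = ((N : ℝ) + 1 - a) * (a * (a + 1) / 2) := by
    have : ∀ k ∈ Finset.range a, gf N a (k + 1) = ((k : ℝ) + 1) * ((N : ℝ) + 1 - a) := by
      intro k hk
      have hk' : k < a := Finset.mem_range.mp hk
      unfold gf
      have e1 : min a (k + 1) = k + 1 := by omega
      have e2 : max a (k + 1) = a := by omega
      rw [e1, e2]; push_cast; ring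
    rw [Finset.sum_congr rfl this, ← Finset.sum_mul, gauss1]; ring
  have h2 : ∑ k ∈ Finset.Ico a N, gf N a (k + 1)
      = (a : ℝ) * (((N : ℝ) - a) * ((N : ℝ) - a + 1) / 2) := by
    have : ∀ k ∈ Finset.Ico a N, gf N a (k + 1) = (a : ℝ) * ((N : ℝ) - k) := by
      intro k hk
      obtain ⟨hka, hkN⟩ := Finset.mem_Ico.mp hk
      unfold gf
      have e1 : min a (k + 1) = a := by omega
      have e2 : max a (k + 1) = k + 1 := by omega
      rw [e1, e2]; push_cast; ring
    rw [Finset.sum_congr rfl this, ← Finset.mul_sum]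
    congr 1
    rw [Finset.sum_Ico_eq_sum_range]
    have : ∀ k ∈ Finset.range (N - a), ((N : ℝ) - (a + k)) = (((N - a : ℕ) : ℝ) - k) := by
      intro k hk
      push_cast [Nat.cast_sub haN]; ring
    calc ∑ k ∈ Finset.range (N - a), ((N : ℝ) - ↑(a + k))
        = ∑ k ∈ Finset.range (N - a), (((N - a : ℕ) : ℝ) - k) := by
          apply Finset.sum_congr rfl; intro k hk; push_cast [Nat.cast_sub haN]; ring
      _ = ((N - a : ℕ) : ℝ) * ((N - a : ℕ) + 1) / 2 := gauss2 _
      _ = ((N : ℝ) - a) * ((N : ℝ) - a + 1) / 2 := by rw [Nat.cast_sub haN]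
  rw [hsplit, h1, h2]; ring

noncomputable def Binv (N : ℕ) : Matrix (Fin N) (Fin N) ℝ :=
  Matrix.of fun i j => -gf N ((i : ℕ) + 1) ((j : ℕ) + 1) / ((N : ℝ) + 1) ^ 3

lemma gf_zero (N b : ℕ) : gf N 0 b = 0 := by unfold gf; simp

lemma gf_top (N b : ℕ) (hb : b ≤ N + 1) : gf N (N + 1) b = 0 := by
  unfold gf
  have : max (N + 1) b = N + 1 := by omega
  rw [this]; push_cast; ring

lemma tridiag_sum (N : ℕ) (i : Fin N) (g : ℕ → ℝ) (hg0 : g 0 = 0) (hgN : g (N + 1) = 0) :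
    ∑ j : Fin N, (if (i : ℕ) = (j : ℕ) then (-2 : ℝ)
        else if (i : ℕ) + 1 = (j : ℕ) ∨ (j : ℕ) + 1 = (i : ℕ) then 1 else 0) * g ((j : ℕ) + 1)
      = g (i : ℕ) - 2 * g ((i : ℕ) + 1) + g ((i : ℕ) + 2) := by
  have key : ∀ j : Fin N,
      (if (i : ℕ) = (j : ℕ) then (-2 : ℝ)
        else if (i : ℕ) + 1 = (j : ℕ) ∨ (j : ℕ) + 1 = (i : ℕ) then 1 else 0) * g ((j : ℕ) + 1)
      = (if j = i then -2 * g ((i : ℕ) + 1) else 0)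
        + (if (j : ℕ) + 1 = (i : ℕ) then g ((j : ℕ) + 1) else 0)
        + (if (i : ℕ) + 1 = (j : ℕ) then g ((j : ℕ) + 1) else 0) := by
    intro j
    rcases eq_or_ne j i with rfl | hne
    · rw [if_pos rfl, if_pos rfl, if_neg (fun h : (j:ℕ)+1 = (j:ℕ) => by omega)]
      ring
    · have hvne : (i : ℕ) ≠ (j : ℕ) := fun h => hne (Fin.ext h.symm)
      rw [if_neg hvne, if_neg hne]
      by_cases h1 : (j : ℕ) + 1 = (i : ℕ)
      · rw [if_pos (Or.inr h1), if_pos h1, if_neg (by omega)]; ring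
      · by_cases h2 : (i : ℕ) + 1 = (j : ℕ)
        · rw [if_pos (Or.inl h2), if_neg h1, if_pos h2]; ring
        · rw [if_neg (by tauto), if_neg h1, if_neg h2]; ring
  have hS1 : ∑ j : Fin N, (if j = i then -2 * g ((i : ℕ) + 1) else 0)
      = -2 * g ((i : ℕ) + 1) := by
    rw [Finset.sum_ite_eq' Finset.univ i]; simp
  have hS2 : ∑ j : Fin N, (if (j : ℕ) + 1 = (i : ℕ) then g ((j : ℕ) + 1) else 0)
      = g (i : ℕ) := by
    rcases Nat.eq_zero_or_pos (i : ℕ) with h0 | hpos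
    · rw [h0, hg0]
      exact Finset.sum_eq_zero fun j _ => if_neg (by omega)
    · have hlt : (i : ℕ) - 1 < N := by omega
      set j0 : Fin N := ⟨(i : ℕ) - 1, hlt⟩ with hj0
      have hiff : ∀ j : Fin N, ((j : ℕ) + 1 = (i : ℕ)) ↔ j = j0 := by
        intro j
        constructor
        · intro h; apply Fin.ext; simp [hj0]; omega
        · intro h; subst h; simp [hj0]; omega
      calc ∑ j : Fin N, (if (j : ℕ) + 1 = (i : ℕ) then g ((j : ℕ) + 1) else 0)
          = ∑ j : Fin N, (if j = j0 then g ((j : ℕ) + 1) else 0) := by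
            apply Finset.sum_congr rfl; intro j _; simp_rw [hiff j]
        _ = g ((j0 : ℕ) + 1) := by rw [Finset.sum_ite_eq' Finset.univ j0]; simp
        _ = g (i : ℕ) := by congr 1; simp [hj0]; omega
  have hS3 : ∑ j : Fin N, (if (i : ℕ) + 1 = (j : ℕ) then g ((j : ℕ) + 1) else 0)
      = g ((i : ℕ) + 2) := by
    rcases lt_or_eq_of_le (Nat.succ_le_of_lt i.isLt) with hlt | heq
    · set j0 : Fin N := ⟨(i : ℕ) + 1, hlt⟩ with hj0
      have hiff : ∀ j : Fin N, ((i : ℕ) + 1 = (j : ℕ)) ↔ j = j0 := by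
        intro j
        constructor
        · intro h; apply Fin.ext; simp [hj0]; omega
        · intro h; subst h; simp [hj0]
      calc ∑ j : Fin N, (if (i : ℕ) + 1 = (j : ℕ) then g ((j : ℕ) + 1) else 0)
          = ∑ j : Fin N, (if j = j0 then g ((j : ℕ) + 1) else 0) := by
            apply Finset.sum_congr rfl; intro j _; simp_rw [hiff j]
        _ = g ((j0 : ℕ) + 1) := by rw [Finset.sum_ite_eq' Finset.univ j0]; simp
        _ = g ((i : ℕ) + 2) := by congr 1
    · have h2 : (i : ℕ) + 2 = N + 1 := by omega
      rw [h2, hgN]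
      exact Finset.sum_eq_zero fun j _ => if_neg (by omega)
  rw [Finset.sum_congr rfl fun j _ => key j, Finset.sum_add_distrib, Finset.sum_add_distrib,
    hS1, hS2, hS3]
  ring

lemma gf_nonneg (N a b : ℕ) (ha : a ≤ N + 1) (hb : b ≤ N + 1) : 0 ≤ gf N a b := by
  unfold gf
  apply mul_nonneg (by positivity)
  have h : ((max a b : ℕ) : ℝ) ≤ (N : ℝ) + 1 := by exact_mod_cast (by omega : max a b ≤ N + 1)
  linarith

lemma dl_mul_Binv (N : ℕ) (hN : 1 ≤ N) :
    dirichletLaplacian N (1 / ((N : ℝ) + 1)) * Binv N = 1 := by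
  have hne : (N : ℝ) + 1 ≠ 0 := by positivity
  ext i k
  rw [Matrix.mul_apply]
  have hterm : ∀ j : Fin N,
      dirichletLaplacian N (1 / ((N : ℝ) + 1)) i j * Binv N j k
      = (-(1 / ((N : ℝ) + 1))) *
        ((if (i : ℕ) = (j : ℕ) then (-2 : ℝ)
          else if (i : ℕ) + 1 = (j : ℕ) ∨ (j : ℕ) + 1 = (i : ℕ) then 1 else 0)
          * gf N ((j : ℕ) + 1) ((k : ℕ) + 1)) := by
    intro j
    simp only [dirichletLaplacian, Binv, Matrix.of_apply]
    split_ifs <;> field_simp <;> ring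
  rw [Finset.sum_congr rfl fun j _ => hterm j, ← Finset.mul_sum]
  have key := tridiag_sum N i (fun m => gf N m ((k : ℕ) + 1)) (gf_zero N _)
    (gf_top N _ (by have := k.isLt; omega))
  rw [key]
  have hsd := gf_secondDiff N ((i : ℕ) + 1) ((k : ℕ) + 1) (by omega)
    (by have := i.isLt; omega) (by omega) (by have := k.isLt; omega)
  simp only [Nat.add_sub_cancel] at hsd
  rw [show (i : ℕ) + 1 + 1 = (i : ℕ) + 2 from rfl] at hsd
  rw [hsd, Matrix.one_apply]
  by_cases hik : i = k
  · subst hik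
    rw [if_pos rfl, if_pos rfl]
    field_simp
  · rw [if_neg (fun h : (i : ℕ) + 1 = (k : ℕ) + 1 => hik (Fin.ext (by omega))), if_neg hik]
    ring

lemma Binv_norm_le (N : ℕ) (hN : 1 ≤ N) : ‖Binv N‖ ≤ 1 / 8 := by
  rw [Matrix.linfty_opNorm_def]
  rw [show (1 / 8 : ℝ) = (((1 / 8 : NNReal)) : ℝ) by norm_num, NNReal.coe_le_coe]
  apply Finset.sup_le
  intro i _
  rw [← NNReal.coe_le_coe]
  push_cast
  have habs : ∀ j : Fin N, ‖Binv N i j‖ = gf N ((i : ℕ) + 1) ((j : ℕ) + 1) / ((N : ℝ) + 1) ^ 3 := by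
    intro j
    simp only [Binv, Matrix.of_apply, Real.norm_eq_abs]
    rw [abs_div, abs_neg,
      abs_of_nonneg (gf_nonneg N _ _ (by have := i.isLt; omega) (by have := j.isLt; omega)),
      abs_of_nonneg (by positivity)]
  rw [Finset.sum_congr rfl fun j _ => habs j, ← Finset.sum_div]
  have hsum : ∑ j : Fin N, gf N ((i : ℕ) + 1) ((j : ℕ) + 1)
      = ((N : ℝ) + 1) * ((i : ℕ) + 1 : ℕ) * ((N : ℝ) + 1 - ((i : ℕ) + 1 : ℕ)) / 2 := by
    rw [Fin.sum_univ_eq_sum_range (fun m => gf N ((i : ℕ) + 1) (m + 1))]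
    exact gf_rowSum N ((i : ℕ) + 1) (by omega) (by have := i.isLt; omega)
  rw [hsum]
  have hx1 : (1 : ℝ) ≤ ((i : ℕ) : ℝ) + 1 := by have := Nat.cast_nonneg (α := ℝ) (i : ℕ); linarith
  have hxN : ((i : ℕ) : ℝ) + 1 ≤ (N : ℝ) := by exact_mod_cast (by have := i.isLt; omega : (i : ℕ) + 1 ≤ N)
  have hpos : (0 : ℝ) < ((N : ℝ) + 1) ^ 3 := by positivity
  rw [div_div, div_le_iff₀ (by positivity)]
  push_cast
  nlinarith [sq_nonneg ((N : ℝ) + 1 - 2 * (((i : ℕ) : ℝ) + 1)), sq_nonneg ((N : ℝ) + 1)]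

/-- For `A = (1/h²)·tridiag(1,−2,1)` with `h = 1/(N+1)`, `A` is invertible and
`‖A⁻¹‖_∞ ≤ 1/8`, where `‖·‖_∞` is the operator norm induced by the maximum norm on `ℝ^N`. -/
theorem dirichletLaplacian_inv_bound (N : ℕ) (hN : 1 ≤ N) :
    IsUnit (dirichletLaplacian N (1 / ((N : ℝ) + 1))).det ∧
      ‖(dirichletLaplacian N (1 / ((N : ℝ) + 1)))⁻¹‖ ≤ 1 / 8 := by
  have hAB := dl_mul_Binv N hN
  refine ⟨Matrix.isUnit_det_of_right_inverse hAB, ?_⟩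
  rw [Matrix.inv_eq_right_inv hAB]
  exact Binv_norm_le N hN
end
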